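/- With the equilibrium queueing profile Q defined by Q(t) = ∫_{τₛ}^{t} β(n(u)) du for t ≤ 0 and Q(t) = Q(0) − ∫₀^t γ(n(u)) du for t > 0, and any traveler m with t(m) < 0: the cost function C_m(u) is strictly decreasing in u on [τₛ, t(m)] and strictly increasing on [t(m), τₑ]. -/

import Mathlib

open MeasureTheory intervalIntegral

private lemma integral_lt_const_mul {f : ℝ → ℝ} {a b c : ℝ} (hab : a < b)
    (hf : IntervalIntegrable f volume a b) (h : ∀ x ∈ Set.Ioo a b, f x < c) :
    (∫ x in a..b, f x) < c * (b - a) := by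
  have h0 : 0 < ∫ x in a..b, (c - f x) :=
    intervalIntegral_pos_of_pos_on (intervalIntegrable_const.sub hf)
      (fun x hx => sub_pos.2 (h x hx)) hab
  rw [intervalIntegral.integral_sub intervalIntegrable_const hf,
    intervalIntegral.integral_const, smul_eq_mul] at h0
  nlinarith [h0]

private lemma const_mul_lt_integral {f : ℝ → ℝ} {a b c : ℝ} (hab : a < b)
    (hf : IntervalIntegrable f volume a b) (h : ∀ x ∈ Set.Ioo a b, c < f x) :
    c * (b - a) < ∫ x in a..b, f x := by
  have h0 : 0 < ∫ x in a..b, (f x - c) :=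
    intervalIntegral_pos_of_pos_on (hf.sub intervalIntegrable_const)
      (fun x hx => sub_pos.2 (h x hx)) hab
  rw [intervalIntegral.integral_sub hf intervalIntegrable_const,
    intervalIntegral.integral_const, smul_eq_mul] at h0
  nlinarith [h0]

/-- For a traveler m with t(m) < 0, the cost C_m is strictly decreasing
on [τₛ, t(m)] and strictly increasing on [t(m), τₑ] under the equilibrium profile. -/
theorem cost_unimodal_early_traveler
    (N s N₁ : ℝ) (hN : 0 < N) (hs : 0 < s) (hN₁ : N₁ ∈ Set.Ioo (0:ℝ) N)
    (β γ : ℝ → ℝ)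
    (hβc : ContinuousOn β (Set.Icc 0 N))
    (hβmono : StrictMonoOn β (Set.Icc 0 N))
    (hβmem : ∀ n ∈ Set.Icc (0:ℝ) N, β n ∈ Set.Ioo (0:ℝ) 1)
    (hγc : ContinuousOn γ (Set.Icc 0 N))
    (hγanti : StrictAntiOn γ (Set.Icc 0 N))
    (hγpos : ∀ n ∈ Set.Icc (0:ℝ) N, 0 < γ n)
    (hbal : (∫ n in (0:ℝ)..N₁, β n) = ∫ n in N₁..N, γ n)
    (Q : ℝ → ℝ)
    (hQ1 : ∀ t ∈ Set.Icc (-N₁ / s) 0, Q t = ∫ u in (-N₁ / s)..t, β (N₁ + u * s))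
    (hQ2 : ∀ t ∈ Set.Ioc (0:ℝ) ((N - N₁) / s),
      Q t = Q 0 - ∫ u in (0:ℝ)..t, γ (N₁ + u * s))
    (m : ℝ) (hm : m ∈ Set.Icc (0:ℝ) N) (htm : (m - N₁) / s < 0) :
    StrictAntiOn (fun u => Q u + β m * max (-u) 0 + γ m * max u 0)
      (Set.Icc (-N₁ / s) ((m - N₁) / s)) ∧
    StrictMonoOn (fun u => Q u + β m * max (-u) 0 + γ m * max u 0)
      (Set.Icc ((m - N₁) / s) ((N - N₁) / s)) := by
  obtain ⟨hN₁0, hN₁N⟩ := hN₁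
  obtain ⟨hm0, hmN⟩ := hm
  set τs : ℝ := -N₁ / s with hτs
  set tm : ℝ := (m - N₁) / s with htmdef
  set τe : ℝ := (N - N₁) / s with hτe
  set C : ℝ → ℝ := fun u => Q u + β m * max (-u) 0 + γ m * max u 0 with hC
  have hs' : s ≠ 0 := ne_of_gt hs
  have hτs_s : N₁ + τs * s = 0 := by rw [hτs, div_mul_cancel₀ _ hs']; ring
  have htm_s : N₁ + tm * s = m := by rw [htmdef, div_mul_cancel₀ _ hs']; ring
  have hτe_s : N₁ + τe * s = N := by rw [hτe, div_mul_cancel₀ _ hs']; ring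
  have hτsneg : τs < 0 := div_neg_of_neg_of_pos (by linarith) hs
  have hτepos : 0 < τe := div_pos (by linarith) hs
  have hτstm : τs ≤ tm := (div_le_div_iff_of_pos_right hs).2 (by linarith)
  have hmN₁ : m < N₁ := by nlinarith [(div_lt_iff₀ hs).1 htm]
  -- affine map facts
  have hmaps : ∀ v ∈ Set.Icc τs τe, N₁ + v * s ∈ Set.Icc (0:ℝ) N := by
    intro v hv
    constructor
    · nlinarith [hv.1]
    · nlinarith [hv.2]
  have hgc : ContinuousOn (fun v => β (N₁ + v * s)) (Set.Icc τs τe) :=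
    hβc.comp ((continuous_const.add (continuous_id.mul continuous_const)).continuousOn) hmaps
  have hhc : ContinuousOn (fun v => γ (N₁ + v * s)) (Set.Icc τs τe) :=
    hγc.comp ((continuous_const.add (continuous_id.mul continuous_const)).continuousOn) hmaps
  have hgint : ∀ a ∈ Set.Icc τs τe, ∀ b ∈ Set.Icc τs τe,
      IntervalIntegrable (fun v => β (N₁ + v * s)) volume a b := fun a ha b hb =>
    (hgc.mono (Set.uIcc_subset_Icc ha hb)).intervalIntegrable
  have hhint : ∀ a ∈ Set.Icc τs τe, ∀ b ∈ Set.Icc τs τe,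
      IntervalIntegrable (fun v => γ (N₁ + v * s)) volume a b := fun a ha b hb =>
    (hhc.mono (Set.uIcc_subset_Icc ha hb)).intervalIntegrable
  -- Q differences on the negative side
  have hQdiff_neg : ∀ u₁ ∈ Set.Icc τs (0:ℝ), ∀ u₂ ∈ Set.Icc τs (0:ℝ),
      Q u₂ - Q u₁ = ∫ v in u₁..u₂, β (N₁ + v * s) := by
    intro u₁ h₁ u₂ h₂
    have m₁ : u₁ ∈ Set.Icc τs τe := ⟨h₁.1, le_trans h₁.2 hτepos.le⟩
    have m₂ : u₂ ∈ Set.Icc τs τe := ⟨h₂.1, le_trans h₂.2 hτepos.le⟩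
    have ms : τs ∈ Set.Icc τs τe := ⟨le_refl _, by linarith⟩
    rw [hQ1 u₁ h₁, hQ1 u₂ h₂]
    exact integral_interval_sub_left (hgint τs ms u₂ m₂) (hgint τs ms u₁ m₁)
  -- Q formula on the nonnegative side (including 0)
  have hQ2' : ∀ u ∈ Set.Icc (0:ℝ) τe, Q u = Q 0 - ∫ v in (0:ℝ)..u, γ (N₁ + v * s) := by
    intro u hu
    rcases eq_or_lt_of_le hu.1 with h | h
    · simp [← h]
    · exact hQ2 u ⟨h, hu.2⟩
  have hQdiff_pos : ∀ u₁ ∈ Set.Icc (0:ℝ) τe, ∀ u₂ ∈ Set.Icc (0:ℝ) τe,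
      Q u₂ - Q u₁ = -∫ v in u₁..u₂, γ (N₁ + v * s) := by
    intro u₁ h₁ u₂ h₂
    have m₁ : u₁ ∈ Set.Icc τs τe := ⟨le_trans hτsneg.le h₁.1, h₁.2⟩
    have m₂ : u₂ ∈ Set.Icc τs τe := ⟨le_trans hτsneg.le h₂.1, h₂.2⟩
    have m0 : (0:ℝ) ∈ Set.Icc τs τe := ⟨hτsneg.le, hτepos.le⟩
    rw [hQ2' u₁ h₁, hQ2' u₂ h₂]
    have := integral_interval_sub_left (hhint 0 m0 u₂ m₂) (hhint 0 m0 u₁ m₁)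
    linarith [this]
  -- C on nonpositive u
  have hCneg : ∀ u : ℝ, u ≤ 0 → C u = Q u - β m * u := by
    intro u hu
    simp only [hC]
    rw [max_eq_left (neg_nonneg.2 hu), max_eq_right hu]
    ring
  have hCpos : ∀ u : ℝ, 0 ≤ u → C u = Q u + γ m * u := by
    intro u hu
    simp only [hC]
    rw [max_eq_right (neg_nonpos.2 hu), max_eq_left hu]
    ring
  have hmIcc : m ∈ Set.Icc (0:ℝ) N := ⟨hm0, hmN⟩
  -- Part 1: strict decrease on [τs, tm]
  have part1 : StrictAntiOn C (Set.Icc τs tm) := by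
    intro u₁ h₁ u₂ h₂ h12
    have hu₂0 : u₂ ≤ 0 := h₂.2.trans htm.le
    have hu₁0 : u₁ ≤ 0 := h12.le.trans hu₂0
    have hI₁ : u₁ ∈ Set.Icc τs (0:ℝ) := ⟨h₁.1, hu₁0⟩
    have hI₂ : u₂ ∈ Set.Icc τs (0:ℝ) := ⟨h₂.1, hu₂0⟩
    have hdiff := hQdiff_neg u₁ hI₁ u₂ hI₂
    have hint : (∫ v in u₁..u₂, β (N₁ + v * s)) < β m * (u₂ - u₁) := by
      apply integral_lt_const_mul h12
        (hgint u₁ ⟨hI₁.1, hI₁.2.trans hτepos.le⟩ u₂ ⟨hI₂.1, hI₂.2.trans hτepos.le⟩)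
      intro x hx
      apply hβmono (hmaps x ⟨h₁.1.trans hx.1.le, (hx.2.trans_le h₂.2).le.trans (by linarith)⟩) hmIcc
      have : x * s < tm * s := by
        apply mul_lt_mul_of_pos_right _ hs
        exact hx.2.trans_le h₂.2
      nlinarith [htm_s]
    rw [hCneg u₁ hu₁0, hCneg u₂ hu₂0]
    nlinarith [hdiff, hint]
  -- strict increase on [tm, 0]
  have part2a : ∀ u₁ ∈ Set.Icc tm (0:ℝ), ∀ u₂ ∈ Set.Icc tm (0:ℝ), u₁ < u₂ → C u₁ < C u₂ := by
    intro u₁ h₁ u₂ h₂ h12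
    have hI₁ : u₁ ∈ Set.Icc τs (0:ℝ) := ⟨hτstm.trans h₁.1, h₁.2⟩
    have hI₂ : u₂ ∈ Set.Icc τs (0:ℝ) := ⟨hτstm.trans h₂.1, h₂.2⟩
    have hdiff := hQdiff_neg u₁ hI₁ u₂ hI₂
    have hint : β m * (u₂ - u₁) < ∫ v in u₁..u₂, β (N₁ + v * s) := by
      apply const_mul_lt_integral h12
        (hgint u₁ ⟨hI₁.1, hI₁.2.trans hτepos.le⟩ u₂ ⟨hI₂.1, hI₂.2.trans hτepos.le⟩)
      intro x hx
      apply hβmono hmIcc (hmaps x ⟨hI₁.1.trans hx.1.le, (hx.2.trans_le h₂.2).le.trans hτepos.le⟩)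
      have : tm * s < x * s := mul_lt_mul_of_pos_right (h₁.1.trans_lt hx.1) hs
      nlinarith [htm_s]
    rw [hCneg u₁ hI₁.2, hCneg u₂ hI₂.2]
    nlinarith [hdiff, hint]
  -- strict increase on [0, τe]
  have part2b : ∀ u₁ ∈ Set.Icc (0:ℝ) τe, ∀ u₂ ∈ Set.Icc (0:ℝ) τe, u₁ < u₂ → C u₁ < C u₂ := by
    intro u₁ h₁ u₂ h₂ h12
    have hdiff := hQdiff_pos u₁ h₁ u₂ h₂
    have hint : (∫ v in u₁..u₂, γ (N₁ + v * s)) < γ m * (u₂ - u₁) := by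
      apply integral_lt_const_mul h12
        (hhint u₁ ⟨hτsneg.le.trans h₁.1, h₁.2⟩ u₂ ⟨hτsneg.le.trans h₂.1, h₂.2⟩)
      intro x hx
      apply hγanti hmIcc
        (hmaps x ⟨hτsneg.le.trans (h₁.1.trans hx.1.le), (hx.2.trans_le h₂.2).le⟩)
      have : 0 < x := h₁.1.trans_lt hx.1
      nlinarith
    rw [hCpos u₁ h₁.1, hCpos u₂ (h₁.1.trans h12.le)]
    nlinarith [hdiff, hint]
  refine ⟨part1, ?_⟩
  intro u₁ h₁ u₂ h₂ h12
  rcases le_or_gt u₂ 0 with hu₂ | hu₂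
  · exact part2a u₁ ⟨h₁.1, h12.le.trans hu₂⟩ u₂ ⟨h₂.1, hu₂⟩ h12
  · rcases le_or_gt 0 u₁ with hu₁ | hu₁
    · exact part2b u₁ ⟨hu₁, h₁.2⟩ u₂ ⟨hu₂.le, h₂.2⟩ h12
    · have hA : C u₁ < C 0 := part2a u₁ ⟨h₁.1, hu₁.le⟩ 0 ⟨htm.le, le_refl _⟩ hu₁
      have hB : C 0 < C u₂ := part2b 0 ⟨le_refl _, hτepos.le⟩ u₂ ⟨hu₂.le, h₂.2⟩ hu₂
      exact hA.trans hB
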